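/- If the number of linearly independent within-group style difference vectors among n samples is at least q, i.e., the differences Δ_i − Δ_{i'} over grouped pairs span ℝ^q, then in the model x_i = x⁰_i + W Δ_i with W of rank q, the set {θ : (x_i − x_{i'})ᵀθ = 0 for all grouped pairs (i,i')} equals {θ : Wᵀθ = 0}. -/
import Mathlib


open Matrix

/-- Identification of the invariant space from grouped observations: in the model
`xᵢ = x⁰ᵢ + WΔᵢ`, if grouped pairs share the same style-free image and the
within-group style differences `Δᵢ − Δᵢ'` span `ℝ^q`, then the set of `θ`
orthogonal to all within-group differences `xᵢ − xᵢ'` equals `{θ : Wᵀθ = 0}`. -/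
theorem estimated_invariant_space_eq_true
    {p q n : ℕ} (W : Matrix (Fin p) (Fin q) ℝ) (hW : W.rank = q)
    (x x0 : Fin n → Fin p → ℝ) (Δ : Fin n → Fin q → ℝ)
    (hx : ∀ i, x i = x0 i + W *ᵥ Δ i)
    (P : Finset (Fin n × Fin n))
    (hgroup : ∀ pr ∈ P, x0 pr.1 = x0 pr.2)
    (hspan : Submodule.span ℝ {d : Fin q → ℝ | ∃ pr ∈ P, d = Δ pr.1 - Δ pr.2} = ⊤) :
    {θ : Fin p → ℝ | ∀ pr ∈ P, (x pr.1 - x pr.2) ⬝ᵥ θ = 0}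
      = {θ : Fin p → ℝ | Wᵀ *ᵥ θ = 0} := by
  have hdiff : ∀ pr ∈ P, x pr.1 - x pr.2 = W *ᵥ (Δ pr.1 - Δ pr.2) := by
    intro pr hpr
    rw [hx pr.1, hx pr.2, hgroup pr hpr, Matrix.mulVec_sub]
    abel
  have hdot : ∀ (v : Fin q → ℝ) (θ : Fin p → ℝ),
      (W *ᵥ v) ⬝ᵥ θ = v ⬝ᵥ (Wᵀ *ᵥ θ) := by
    intro v θ
    rw [Matrix.mulVec_transpose, dotProduct_comm v,
      dotProduct_comm (W *ᵥ v), Matrix.dotProduct_mulVec]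
  ext θ
  simp only [Set.mem_setOf_eq]
  constructor
  · intro h
    have key : ∀ v ∈ ({d : Fin q → ℝ | ∃ pr ∈ P, d = Δ pr.1 - Δ pr.2} : Set _),
        v ⬝ᵥ (Wᵀ *ᵥ θ) = 0 := by
      rintro v ⟨pr, hpr, rfl⟩
      rw [← hdot, ← hdiff pr hpr]
      exact h pr hpr
    have hall : ∀ v : Fin q → ℝ, v ⬝ᵥ (Wᵀ *ᵥ θ) = 0 := by
      intro v
      have hv : v ∈ Submodule.span ℝ {d : Fin q → ℝ | ∃ pr ∈ P, d = Δ pr.1 - Δ pr.2} := by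
        rw [hspan]; trivial
      induction hv using Submodule.span_induction with
      | mem u hu => exact key u hu
      | zero => simp
      | add u w _ _ hu hw => rw [add_dotProduct, hu, hw, add_zero]
      | smul c u _ hu => rw [smul_dotProduct, hu, smul_zero]
    have := hall (Wᵀ *ᵥ θ)
    exact dotProduct_self_eq_zero.mp this
  · intro h pr hpr
    rw [hdiff pr hpr, hdot, h, dotProduct_zero]
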